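/- Along any solution c of the Kepler–Heisenberg Hamilton equations, the dilational momentum J(t) = x(t)·p_x(t) + y(t)·p_y(t) + 2z(t)·p_z(t) is differentiable and satisfies J'(t) = 2·H(c(t)) for all t. In particular, if H(c(t)) = 0 for all t, then J is constant along the solution. -/

import Mathlib

open Real Set

/-- The Kepler-Heisenberg Hamiltonian on phase space `ℝ^6` with coordinates
`(x, y, z, pₓ, p_y, p_z)`. -/
noncomputable def KH (x y z px py pz : ℝ) : ℝ :=
  (1/2) * ((px - (1/2) * y * pz)^2 + (py + (1/2) * x * pz)^2)
    - 1 / (8 * π * Real.sqrt ((x^2 + y^2)^2 + 16 * z^2))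

/-- The adapted coordinate `s = (1/4)·log((x² + y²)² + 16z²)`. -/
noncomputable def sCoord (x y z : ℝ) : ℝ :=
  (1/4) * Real.log ((x^2 + y^2)^2 + 16 * z^2)

/-- The adapted coordinate `u = arctan(4z/(x² + y²))`. -/
noncomputable def uCoord (x y z : ℝ) : ℝ :=
  Real.arctan (4 * z / (x^2 + y^2))

/-- The dilational momentum `J = p_s = x·pₓ + y·p_y + 2z·p_z`. -/
def Jmom (x y z px py pz : ℝ) : ℝ := x * px + y * py + 2 * z * pz

/-- The angular momentum `p_θ = x·p_y − y·pₓ`. -/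
def pTheta (x y px py : ℝ) : ℝ := x * py - y * px

/-- The adapted momentum coordinate `p_u`. -/
noncomputable def pU (x y z px py pz : ℝ) : ℝ :=
  (1/4) * pz * (x^2 + y^2) - 2 * z * (x * px + y * py) / (x^2 + y^2)

/-- Rotation by angle `φ` about the `z`-axis, lifted to phase space. -/
noncomputable def rot (φ : ℝ) (q : ℝ × ℝ × ℝ × ℝ × ℝ × ℝ) : ℝ × ℝ × ℝ × ℝ × ℝ × ℝ :=
  (q.1 * Real.cos φ - q.2.1 * Real.sin φ,
   q.1 * Real.sin φ + q.2.1 * Real.cos φ,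
   q.2.2.1,
   q.2.2.2.1 * Real.cos φ - q.2.2.2.2.1 * Real.sin φ,
   q.2.2.2.1 * Real.sin φ + q.2.2.2.2.1 * Real.cos φ,
   q.2.2.2.2.2)

/-- The Carnot dilation by `λ > 0`, lifted to phase space:
`δ_λ(x, y, z, pₓ, p_y, p_z) = (λx, λy, λ²z, λ⁻¹pₓ, λ⁻¹p_y, λ⁻²p_z)`. -/
noncomputable def dil (l : ℝ) (q : ℝ × ℝ × ℝ × ℝ × ℝ × ℝ) : ℝ × ℝ × ℝ × ℝ × ℝ × ℝ :=
  (l * q.1, l * q.2.1, l^2 * q.2.2.1,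
   l⁻¹ * q.2.2.2.1, l⁻¹ * q.2.2.2.2.1, (l^2)⁻¹ * q.2.2.2.2.2)

/-- The Hamiltonian as a function on the product phase space. -/
noncomputable def KH6 (q : ℝ × ℝ × ℝ × ℝ × ℝ × ℝ) : ℝ :=
  KH q.1 q.2.1 q.2.2.1 q.2.2.2.1 q.2.2.2.2.1 q.2.2.2.2.2

/-- `c = (x, y, z, pₓ, p_y, p_z)` is a solution of Hamilton's equations for `KH` on the
open interval `I`: each coordinate function is differentiable with derivative given by the
corresponding (signed) partial derivative of `KH`, and the position avoids the origin. -/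
def IsSolutionOn (I : Set ℝ) (x y z px py pz : ℝ → ℝ) : Prop :=
  IsOpen I ∧ I.OrdConnected ∧ I.Nonempty ∧
  (∀ t ∈ I, (x t, y t, z t) ≠ (0, 0, 0)) ∧
  (∀ t ∈ I,
    HasDerivAt x (deriv (fun a => KH (x t) (y t) (z t) a (py t) (pz t)) (px t)) t ∧
    HasDerivAt y (deriv (fun a => KH (x t) (y t) (z t) (px t) a (pz t)) (py t)) t ∧
    HasDerivAt z (deriv (fun a => KH (x t) (y t) (z t) (px t) (py t) a) (pz t)) t ∧
    HasDerivAt px (-(deriv (fun a => KH a (y t) (z t) (px t) (py t) (pz t)) (x t))) t ∧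
    HasDerivAt py (-(deriv (fun a => KH (x t) a (z t) (px t) (py t) (pz t)) (y t))) t ∧
    HasDerivAt pz (-(deriv (fun a => KH (x t) (y t) a (px t) (py t) (pz t)) (z t))) t)

/-- A solution on a maximal open interval: it cannot be extended to a solution on any
strictly larger open interval. -/
def IsMaximalSolution (I : Set ℝ) (x y z px py pz : ℝ → ℝ) : Prop :=
  IsSolutionOn I x y z px py pz ∧
  ∀ (I' : Set ℝ) (x' y' z' px' py' pz' : ℝ → ℝ),
    IsSolutionOn I' x' y' z' px' py' pz' → I ⊆ I' →
    (∀ t ∈ I, x' t = x t ∧ y' t = y t ∧ z' t = z t ∧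
      px' t = px t ∧ py' t = py t ∧ pz' t = pz t) →
    I' = I

lemma rho_pos {x y z : ℝ} (h : (x, y, z) ≠ (0, 0, 0)) :
    0 < (x^2 + y^2)^2 + 16 * z^2 := by
  rcases eq_or_ne z 0 with hz | hz
  · have hxy : x ≠ 0 ∨ y ≠ 0 := by
      by_contra hc
      push_neg at hc
      exact h (by simp [hc.1, hc.2, hz])
    have : 0 < x^2 + y^2 := by
      rcases hxy with hx | hy
      · positivity
      · positivity
    nlinarith
  · have : 0 < z^2 := by positivity
    nlinarith [sq_nonneg (x^2+y^2)]

lemma hasDerivAt_KH_px (x y z px py pz : ℝ) :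
    HasDerivAt (fun a => KH x y z a py pz) (px - (1/2) * y * pz) px := by
  unfold KH
  have h1 : HasDerivAt (fun a : ℝ => (a - (1/2) * y * pz)^2) (2 * (px - (1/2)*y*pz)) px := by
    simpa using (((hasDerivAt_id px).sub_const ((1/2) * y * pz)).fun_pow 2)
  have h2 := (((h1.add_const ((py + (1/2) * x * pz)^2)).const_mul (1/2 : ℝ)).sub_const
      (1 / (8 * π * Real.sqrt ((x^2 + y^2)^2 + 16 * z^2))))
  convert! h2 using 1
  ring

lemma hasDerivAt_KH_py (x y z px py pz : ℝ) :
    HasDerivAt (fun a => KH x y z px a pz) (py + (1/2) * x * pz) py := by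
  unfold KH
  have h1 : HasDerivAt (fun a : ℝ => (a + (1/2) * x * pz)^2) (2 * (py + (1/2)*x*pz)) py := by
    simpa using (((hasDerivAt_id py).add_const ((1/2) * x * pz)).fun_pow 2)
  have h2 := ((((h1.const_add ((px - (1/2) * y * pz)^2)).const_mul (1/2 : ℝ)).sub_const
      (1 / (8 * π * Real.sqrt ((x^2 + y^2)^2 + 16 * z^2)))))
  convert! h2 using 1
  ring

lemma hasDerivAt_KH_pz (x y z px py pz : ℝ) :
    HasDerivAt (fun a => KH x y z px py a)
      ((px - (1/2)*y*pz) * (-(1/2)*y) + (py + (1/2)*x*pz) * ((1/2)*x)) pz := by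
  unfold KH
  have h1 : HasDerivAt (fun a : ℝ => (px - (1/2) * y * a)^2)
      (2 * (px - (1/2)*y*pz) * (-((1/2)*y))) pz := by
    have := (((hasDerivAt_id pz).const_mul ((1/2)*y)).const_sub px).fun_pow 2
    convert! this using 1
    simp only [id_eq]; push_cast; ring
  have h2 : HasDerivAt (fun a : ℝ => (py + (1/2) * x * a)^2)
      (2 * (py + (1/2)*x*pz) * ((1/2)*x)) pz := by
    have := (((hasDerivAt_id pz).const_mul ((1/2)*x)).const_add py).fun_pow 2
    convert! this using 1
    simp only [id_eq]; push_cast; ring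
  have h3 := (((h1.add h2).const_mul (1/2 : ℝ)).sub_const
      (1 / (8 * π * Real.sqrt ((x^2 + y^2)^2 + 16 * z^2))))
  convert! h3 using 1
  ring

lemma hasDerivAt_pot {g : ℝ → ℝ} {g' t : ℝ} (hg : HasDerivAt g g' t) (hpos : 0 < g t) :
    HasDerivAt (fun a => -(1 / (8 * π * Real.sqrt (g a))))
      (8 * π * (g' / (2 * Real.sqrt (g t))) / (8 * π * Real.sqrt (g t))^2) t := by
  have hs : Real.sqrt (g t) ≠ 0 := by positivity
  have hsq := hg.sqrt (ne_of_gt hpos)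
  have hmul := hsq.const_mul (8 * π)
  have hne : 8 * π * Real.sqrt (g t) ≠ 0 := by positivity
  have hinv := hmul.fun_inv hne
  convert! hinv.neg using 1
  · funext a; rw [one_div, Pi.neg_apply]
  · ring

lemma hasDerivAt_KH_x (x y z px py pz : ℝ) (h : (x, y, z) ≠ (0, 0, 0)) :
    HasDerivAt (fun a => KH a y z px py pz)
      ((py + (1/2)*x*pz) * ((1/2)*pz)
        + x * (x^2 + y^2) / (4 * π * Real.sqrt ((x^2+y^2)^2 + 16*z^2)^3)) x := by
  have hpos := rho_pos h
  have hs : (0:ℝ) < Real.sqrt ((x^2+y^2)^2 + 16*z^2) := Real.sqrt_pos.mpr hpos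
  have hs2 : Real.sqrt ((x^2+y^2)^2 + 16*z^2) ^ 2 = (x^2+y^2)^2 + 16*z^2 :=
    Real.sq_sqrt hpos.le
  have h1 : HasDerivAt (fun a : ℝ => (py + (1/2) * a * pz)^2)
      (2 * (py + (1/2)*x*pz) * ((1/2)*pz)) x := by
    have := (((hasDerivAt_id x).mul_const ((1/2)*pz)).const_add py).fun_pow 2
    convert! this using 1
    · funext a; simp only [id_eq]; ring_nf
    · simp only [id_eq]; push_cast; ring
  have hkin := (h1.const_add ((px - (1/2) * y * pz)^2)).const_mul (1/2 : ℝ)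
  have hg : HasDerivAt (fun a : ℝ => (a^2 + y^2)^2 + 16 * z^2)
      (2 * (x^2 + y^2) * (2*x)) x := by
    have := ((((hasDerivAt_id x).fun_pow 2).add_const (y^2)).fun_pow 2).add_const (16 * z^2)
    convert! this using 1
    simp only [id_eq]; push_cast; ring
  have hpot := hasDerivAt_pot hg hpos
  have hsum := hkin.add hpot
  have heq : (fun a => KH a y z px py pz)
      = fun a => (1/2) * ((px - (1/2) * y * pz)^2 + (py + (1/2) * a * pz)^2)
          + -(1 / (8 * π * Real.sqrt ((a^2 + y^2)^2 + 16 * z^2))) := by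
    funext a; unfold KH; ring
  rw [heq]
  convert! hsum using 1
  have hπ : π ≠ 0 := pi_ne_zero
  have hs3 : Real.sqrt ((x^2+y^2)^2 + 16*z^2) ^ 3
      = Real.sqrt ((x^2+y^2)^2 + 16*z^2) * ((x^2+y^2)^2 + 16*z^2) := by
    rw [pow_succ' (n := 2) (a := Real.sqrt ((x^2+y^2)^2 + 16*z^2)), hs2]
  field_simp
  ring

lemma hasDerivAt_KH_y (x y z px py pz : ℝ) (h : (x, y, z) ≠ (0, 0, 0)) :
    HasDerivAt (fun a => KH x a z px py pz)
      ((px - (1/2)*y*pz) * (-(1/2)*pz)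
        + y * (x^2 + y^2) / (4 * π * Real.sqrt ((x^2+y^2)^2 + 16*z^2)^3)) y := by
  have hpos := rho_pos h
  have hs : (0:ℝ) < Real.sqrt ((x^2+y^2)^2 + 16*z^2) := Real.sqrt_pos.mpr hpos
  have hs2 : Real.sqrt ((x^2+y^2)^2 + 16*z^2) ^ 2 = (x^2+y^2)^2 + 16*z^2 :=
    Real.sq_sqrt hpos.le
  have h1 : HasDerivAt (fun a : ℝ => (px - (1/2) * a * pz)^2)
      (2 * (px - (1/2)*y*pz) * (-((1/2)*pz))) y := by
    have := (((hasDerivAt_id y).mul_const ((1/2)*pz)).const_sub px).fun_pow 2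
    convert! this using 1
    · funext a; simp only [id_eq]; ring_nf
    · simp only [id_eq]; push_cast; ring
  have hkin := (h1.add_const ((py + (1/2) * x * pz)^2)).const_mul (1/2 : ℝ)
  have hg : HasDerivAt (fun a : ℝ => (x^2 + a^2)^2 + 16 * z^2)
      (2 * (x^2 + y^2) * (2*y)) y := by
    have := ((((hasDerivAt_id y).fun_pow 2).const_add (x^2)).fun_pow 2).add_const (16 * z^2)
    convert! this using 1
    simp only [id_eq]; push_cast; ring
  have hpot := hasDerivAt_pot hg hpos
  have hsum := hkin.add hpot
  have heq : (fun a => KH x a z px py pz)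
      = fun a => (1/2) * ((px - (1/2) * a * pz)^2 + (py + (1/2) * x * pz)^2)
          + -(1 / (8 * π * Real.sqrt ((x^2 + a^2)^2 + 16 * z^2))) := by
    funext a; unfold KH; ring
  rw [heq]
  convert! hsum using 1
  have hπ : π ≠ 0 := pi_ne_zero
  field_simp
  ring

lemma hasDerivAt_KH_z (x y z px py pz : ℝ) (h : (x, y, z) ≠ (0, 0, 0)) :
    HasDerivAt (fun a => KH x y a px py pz)
      (8 * z / (4 * π * Real.sqrt ((x^2+y^2)^2 + 16*z^2)^3)) z := by
  have hpos := rho_pos h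
  have hs : (0:ℝ) < Real.sqrt ((x^2+y^2)^2 + 16*z^2) := Real.sqrt_pos.mpr hpos
  have hg : HasDerivAt (fun a : ℝ => (x^2 + y^2)^2 + 16 * a^2) (16 * (2*z)) z := by
    have := (((hasDerivAt_id z).fun_pow 2).const_mul (16:ℝ)).const_add ((x^2 + y^2)^2)
    convert! this using 1
    simp only [id_eq]; push_cast; ring
  have hpot := hasDerivAt_pot hg hpos
  have hsum := hpot.const_add ((1/2) * ((px - (1/2) * y * pz)^2 + (py + (1/2) * x * pz)^2))
  have heq : (fun a => KH x y a px py pz)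
      = fun a => (1/2) * ((px - (1/2) * y * pz)^2 + (py + (1/2) * x * pz)^2)
          + -(1 / (8 * π * Real.sqrt ((x^2 + y^2)^2 + 16 * a^2))) := by
    funext a; unfold KH; ring
  rw [heq]
  convert! hsum using 1
  have hπ : π ≠ 0 := pi_ne_zero
  field_simp
  ring

lemma key_alg (x y z px py pz s : ℝ) (hs : 0 < s) (hπ : (0:ℝ) < π)
    (hs2 : s ^ 2 = (x^2+y^2)^2 + 16*z^2) :
    (px - (1/2)*y*pz) * px
      + x * (-((py + (1/2)*x*pz) * ((1/2)*pz) + x * (x^2 + y^2) / (4 * π * s^3)))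
      + ((py + (1/2)*x*pz) * py
        + y * (-((px - (1/2)*y*pz) * (-(1/2)*pz) + y * (x^2 + y^2) / (4 * π * s^3))))
      + 2 * (((px - (1/2)*y*pz) * (-(1/2)*y) + (py + (1/2)*x*pz) * ((1/2)*x)) * pz
        + z * (-(8 * z / (4 * π * s^3))))
    = 2 * ((1/2) * ((px - (1/2) * y * pz)^2 + (py + (1/2) * x * pz)^2) - 1 / (8 * π * s)) := by
  have hs' : s ≠ 0 := ne_of_gt hs
  have hπ' : π ≠ 0 := ne_of_gt hπ
  have h3 : s^3 = s * ((x^2+y^2)^2 + 16*z^2) := by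
    rw [pow_succ, pow_succ, pow_one]
    nlinarith [hs2]
  rw [h3]
  have hρ : (x^2+y^2)^2 + 16*z^2 ≠ 0 := by nlinarith [sq_nonneg s]
  field_simp
  ring


/-- Along any solution, the dilational momentum `J = x·pₓ + y·p_y + 2z·p_z` is differentiable
with `J' = 2H`; in particular `J` is constant along zero-energy solutions. -/
theorem kepler_heisenberg_J_deriv
    (I : Set ℝ) (x y z px py pz : ℝ → ℝ)
    (hsol : IsSolutionOn I x y z px py pz) :
    (∀ t ∈ I, HasDerivAt (fun t => Jmom (x t) (y t) (z t) (px t) (py t) (pz t))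
        (2 * KH (x t) (y t) (z t) (px t) (py t) (pz t)) t) ∧
    ((∀ t ∈ I, KH (x t) (y t) (z t) (px t) (py t) (pz t) = 0) →
      ∀ t ∈ I, ∀ t' ∈ I,
        Jmom (x t) (y t) (z t) (px t) (py t) (pz t) =
          Jmom (x t') (y t') (z t') (px t') (py t') (pz t')) := by
  obtain ⟨hIo, hIc, hIn, h0, hde⟩ := hsol
  have part1 : ∀ t ∈ I, HasDerivAt (fun t => Jmom (x t) (y t) (z t) (px t) (py t) (pz t))
      (2 * KH (x t) (y t) (z t) (px t) (py t) (pz t)) t := by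
    intro t ht
    obtain ⟨hx, hy, hz, hpx, hpy, hpz⟩ := hde t ht
    have hne := h0 t ht
    have hpos := rho_pos hne
    have hs : (0:ℝ) < Real.sqrt (((x t)^2 + (y t)^2)^2 + 16*(z t)^2) := Real.sqrt_pos.mpr hpos
    have hs2 : Real.sqrt (((x t)^2 + (y t)^2)^2 + 16*(z t)^2) ^ 2
        = ((x t)^2 + (y t)^2)^2 + 16*(z t)^2 := Real.sq_sqrt hpos.le
    rw [(hasDerivAt_KH_px (x t) (y t) (z t) (px t) (py t) (pz t)).deriv] at hx
    rw [(hasDerivAt_KH_py (x t) (y t) (z t) (px t) (py t) (pz t)).deriv] at hy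
    rw [(hasDerivAt_KH_pz (x t) (y t) (z t) (px t) (py t) (pz t)).deriv] at hz
    rw [(hasDerivAt_KH_x (x t) (y t) (z t) (px t) (py t) (pz t) hne).deriv] at hpx
    rw [(hasDerivAt_KH_y (x t) (y t) (z t) (px t) (py t) (pz t) hne).deriv] at hpy
    rw [(hasDerivAt_KH_z (x t) (y t) (z t) (px t) (py t) (pz t) hne).deriv] at hpz
    have hJ := ((hx.mul hpx).add (hy.mul hpy)).add ((hz.mul hpz).const_mul 2)
    have hfun : (fun t => Jmom (x t) (y t) (z t) (px t) (py t) (pz t))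
        = fun t => x t * px t + y t * py t + 2 * (z t * pz t) := by
      funext a; unfold Jmom; ring
    rw [hfun]
    have hval := key_alg (x t) (y t) (z t) (px t) (py t) (pz t)
      (Real.sqrt (((x t)^2 + (y t)^2)^2 + 16*(z t)^2)) hs pi_pos hs2
    convert! hJ using 1
    unfold KH
    linear_combination -hval
  refine ⟨part1, fun hH t ht t' ht' => ?_⟩
  have hconv : Convex ℝ I := convex_iff_ordConnected.mpr hIc
  have hd : ∀ s ∈ I, HasDerivAt
      (fun t => Jmom (x t) (y t) (z t) (px t) (py t) (pz t)) 0 s := by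
    intro s hs
    have := part1 s hs
    rw [hH s hs] at this
    simpa using this
  refine hconv.is_const_of_fderivWithin_eq_zero (𝕜 := ℝ)
    (fun s hs => ((hd s hs).differentiableAt).differentiableWithinAt) ?_ ht ht'
  intro s hs
  rw [fderivWithin_of_isOpen hIo hs, (hd s hs).hasFDerivAt.fderiv]
  ext
  simp
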